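/- (Lemma 2, superadditivity for compatible collections.) Assume Condition (9), i.e., R_s/R_D2D < P_s/(P_Rx + P_Tx). Given valuations U : N → ℝ, define v(S) = ∑_{i ∈ S∩D} U_i − C(S) for every S ⊆ N (so v(∅) = 0). Then v is superadditive over disjoint unions: for any k ≥ 1 and any pairwise disjoint nonempty subsets S_1, …, S_k of N, v(S_1 ∪ ⋯ ∪ S_k) ≥ ∑_{i=1}^k v(S_i). -/

import Mathlib

open Finset

/-- The minimum total energy cost `C(S)` of a coalition `S`. -/
noncomputable def Ccost {α : Type*} [DecidableEq α]
    (Ps Rs PTx PRx RD2D : ℝ) (D S : Finset α) : ℝ :=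
  if (S ∩ D) = ∅ then 0
  else if (S ∩ D).card = 1 then Ps / Rs
  else Ps / Rs + PTx / RD2D + (((S ∩ D).card : ℝ) - 1) * (PRx / RD2D)

/-- Cost as a function of the number of destinations. -/
noncomputable def fcost (a b c : ℝ) : ℕ → ℝ
  | 0 => 0
  | 1 => a
  | (n+2) => a + b + (((n:ℝ) + 2) - 1) * c

lemma Ccost_eq_fcost {α : Type*} [DecidableEq α]
    (Ps Rs PTx PRx RD2D : ℝ) (D S : Finset α) :
    Ccost Ps Rs PTx PRx RD2D D S
      = fcost (Ps / Rs) (PTx / RD2D) (PRx / RD2D) (S ∩ D).card := by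
  rcases h : (S ∩ D).card with _ | _ | n
  · rw [Finset.card_eq_zero] at h
    simp [Ccost, fcost, h]
  · simp [Ccost, fcost, Finset.card_eq_zero, h, ← Finset.card_eq_zero,
      Nat.succ_ne_zero]
  · have h0 : S ∩ D ≠ ∅ := by
      intro he; rw [he] at h; simp at h
    have h1 : (S ∩ D).card ≠ 1 := by omega
    simp only [Ccost, fcost, h0, h1, if_false, h]
    push_cast
    ring

lemma fcost_subadd (a b c : ℝ) (hb : 0 < b) (hc : 0 < c) (h : b + c < a)
    (m n : ℕ) : fcost a b c (m + n) ≤ fcost a b c m + fcost a b c n := by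
  rcases m with _ | _ | m <;> rcases n with _ | _ | n <;>
    simp [fcost, Nat.add_assoc, Nat.add_comm, Nat.add_left_comm] <;>
    push_cast <;>
    linarith

lemma Ccost_union_le {α : Type*} [DecidableEq α]
    (Ps Rs PTx PRx RD2D : ℝ)
    (hb : 0 < PTx / RD2D) (hc : 0 < PRx / RD2D)
    (ha : PTx / RD2D + PRx / RD2D < Ps / Rs)
    (D A B : Finset α) (hAB : Disjoint A B) :
    Ccost Ps Rs PTx PRx RD2D D (A ∪ B)
      ≤ Ccost Ps Rs PTx PRx RD2D D A + Ccost Ps Rs PTx PRx RD2D D B := by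
  have hd : Disjoint (A ∩ D) (B ∩ D) :=
    (hAB.mono (Finset.inter_subset_left) (Finset.inter_subset_left))
  have hcard : ((A ∪ B) ∩ D).card = (A ∩ D).card + (B ∩ D).card := by
    rw [Finset.union_inter_distrib_right, Finset.card_union_of_disjoint hd]
  rw [Ccost_eq_fcost, Ccost_eq_fcost, Ccost_eq_fcost, hcard]
  exact fcost_subadd _ _ _ hb hc ha _ _

/-- Lemma 2: under Condition (9), the value function
`v(S) = ∑_{i ∈ S ∩ D} U_i − C(S)` is superadditive over disjoint unions: for any `k ≥ 1`
and pairwise disjoint nonempty coalitions `S_1, …, S_k`,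
`v(S_1 ∪ ⋯ ∪ S_k) ≥ ∑_{i=1}^k v(S_i)`. -/
theorem value_superadditive
    {α : Type*} [Fintype α] [DecidableEq α]
    (Ps Rs PTx PRx RD2D : ℝ)
    (hPs : 0 < Ps) (hRs : 0 < Rs) (hPTx : 0 < PTx) (hPRx : 0 < PRx)
    (hRD2D : 0 < RD2D)
    (h9 : Rs / RD2D < Ps / (PRx + PTx))
    (D : Finset α) (U : α → ℝ)
    (v : Finset α → ℝ)
    (hv : ∀ S : Finset α, v S = (∑ i ∈ S ∩ D, U i) - Ccost Ps Rs PTx PRx RD2D D S)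
    (k : ℕ) (hk : 1 ≤ k) (S : Fin k → Finset α)
    (hne : ∀ i, (S i).Nonempty)
    (hdisj : ∀ i j, i ≠ j → Disjoint (S i) (S j)) :
    v (Finset.univ.sup S) ≥ ∑ i : Fin k, v (S i) := by
  have hb : 0 < PTx / RD2D := div_pos hPTx hRD2D
  have hc : 0 < PRx / RD2D := div_pos hPRx hRD2D
  have ha : PTx / RD2D + PRx / RD2D < Ps / Rs := by
    rw [div_lt_div_iff₀ hRD2D (add_pos hPRx hPTx)] at h9
    rw [← add_div, div_lt_div_iff₀ hRD2D hRs]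
    nlinarith
  suffices H : ∀ t : Finset (Fin k), v (t.sup S) ≥ ∑ i ∈ t, v (S i) from
    H Finset.univ
  intro t
  induction t using Finset.induction_on with
  | empty => simp [hv, Ccost]
  | @insert a t ha' ih =>
    rw [Finset.sup_insert, Finset.sum_insert ha']
    have hdisj2 : Disjoint (S a) (t.sup S) := by
      rw [Finset.disjoint_sup_right]
      intro j hj
      exact hdisj a j (fun h => ha' (h ▸ hj))
    have key : v (S a ⊔ t.sup S) ≥ v (S a) + v (t.sup S) := by
      rw [hv, hv, hv]
      have hd : Disjoint (S a ∩ D) (t.sup S ∩ D) :=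
        hdisj2.mono Finset.inter_subset_left Finset.inter_subset_left
      have hsum : ∑ i ∈ (S a ⊔ t.sup S) ∩ D, U i
          = (∑ i ∈ S a ∩ D, U i) + ∑ i ∈ t.sup S ∩ D, U i := by
        rw [Finset.sup_eq_union, Finset.union_inter_distrib_right,
          Finset.sum_union hd]
      rw [hsum]
      have := Ccost_union_le Ps Rs PTx PRx RD2D hb hc ha D (S a) (t.sup S) hdisj2
      rw [Finset.sup_eq_union]
      linarith
    linarith [ih]
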